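/- Let n ≥ 3 and let U = span⟨E₁₁ − E_nn⟩ + B_{n−1,2} ≤ sl_n(ℂ), where B_{n−1,2} is the span of elementary matrices E_{kℓ} with k ≤ n−1 and ℓ ≥ 2 intersected with sl_n(ℂ). Then dim U = (n−1)² and for every g ∈ SL_n(ℂ), U + gUg⁻¹ ≠ sl_n(ℂ). -/

import Mathlib

/-- The Lie algebra `sl_n(ℂ)` of traceless matrices, as a subspace of `M_n(ℂ)`. -/
noncomputable def sln (n : ℕ) : Submodule ℂ (Matrix (Fin n) (Fin n) ℂ) :=
  LinearMap.ker (Matrix.traceLinearMap (Fin n) ℂ ℂ)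

/-- Conjugation by `g ∈ SL_n(ℂ)` as a linear map `x ↦ g x g⁻¹`. -/
noncomputable def slConj {n : ℕ} (g : Matrix.SpecialLinearGroup (Fin n) ℂ) :
    Matrix (Fin n) (Fin n) ℂ →ₗ[ℂ] Matrix (Fin n) (Fin n) ℂ where
  toFun x := (g : Matrix (Fin n) (Fin n) ℂ) * x * ((g⁻¹ : Matrix.SpecialLinearGroup (Fin n) ℂ) : Matrix (Fin n) (Fin n) ℂ)
  map_add' x y := by simp [Matrix.mul_add, Matrix.add_mul]
  map_smul' c x := by simp [Matrix.mul_smul, Matrix.smul_mul]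

/-- The subspace `B_{n−1,2} ∩ sl_n(ℂ)`: the span of those elementary matrices `E k ℓ`
(`1`-based indices) with `k ≤ n−1`, `ℓ ≥ 2`, intersected with the traceless matrices. -/
noncomputable def Bn12 (n : ℕ) : Submodule ℂ (Matrix (Fin n) (Fin n) ℂ) :=
  (Submodule.span ℂ
    {m : Matrix (Fin n) (Fin n) ℂ |
      ∃ k ℓ : Fin n, (k : ℕ) + 1 ≤ n - 1 ∧ 2 ≤ (ℓ : ℕ) + 1 ∧
        m = Matrix.single k ℓ 1}) ⊓ sln n

open Matrix Submodule Module

lemma trace_std_mul {n : ℕ} (k l : Fin n) (y : Matrix (Fin n) (Fin n) ℂ) :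
    Matrix.trace (Matrix.single k l (1:ℂ) * y) = y l k := by
  classical
  rw [Matrix.trace, Finset.sum_eq_single k]
  · simp
  · intro b _ hb
    simp [Matrix.diag_apply, Matrix.single_mul_apply_of_ne _ _ _ _ _ hb]
  · simp

section main

variable (n : ℕ) (hn : 3 ≤ n)

/-- The generating set of `Bn12`. -/
def Sset : Set (Matrix (Fin n) (Fin n) ℂ) :=
  {m : Matrix (Fin n) (Fin n) ℂ |
      ∃ k ℓ : Fin n, (k : ℕ) + 1 ≤ n - 1 ∧ 2 ≤ (ℓ : ℕ) + 1 ∧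
        m = Matrix.single k ℓ 1}

lemma Bn12_eq : Bn12 n = Submodule.span ℂ (Sset n) ⊓ sln n := rfl

include hn in
lemma finrank_spanS : finrank ℂ (Submodule.span ℂ (Sset n)) = (n-1) * (n-1) := by
  classical
  set P : Fin n × Fin n → Prop := fun p => (p.1 : ℕ) + 1 ≤ n - 1 ∧ 2 ≤ (p.2 : ℕ) + 1 with hP
  have hrange : Sset n = Set.range (fun p : {p : Fin n × Fin n // P p} =>
      Matrix.stdBasis ℂ (Fin n) (Fin n) p.val) := by
    ext m
    constructor
    · rintro ⟨k, l, hk, hl, rfl⟩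
      exact ⟨⟨(k, l), ⟨hk, hl⟩⟩, by simp [Matrix.stdBasis_eq_single]⟩
    · rintro ⟨⟨⟨k, l⟩, hp⟩, rfl⟩
      exact ⟨k, l, hp.1, hp.2, by simp [Matrix.stdBasis_eq_single]⟩
  have hli : LinearIndependent ℂ (fun p : {p : Fin n × Fin n // P p} =>
      Matrix.stdBasis ℂ (Fin n) (Fin n) p.val) :=
    (Matrix.stdBasis ℂ (Fin n) (Fin n)).linearIndependent.comp Subtype.val Subtype.val_injective
  rw [hrange, finrank_span_eq_card hli]
  -- compute the cardinality
  have h0 : 0 < n := by omega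
  have e1 : {p : Fin n × Fin n // P p} ≃
      {k : Fin n // k ≠ (⟨n-1, by omega⟩ : Fin n)} × {l : Fin n // l ≠ (⟨0, h0⟩ : Fin n)} := by
    refine (Equiv.subtypeEquivRight ?_).trans (Equiv.subtypeProdEquivProd)
    rintro ⟨k, l⟩
    simp only [hP, Ne, Fin.ext_iff]
    constructor
    · rintro ⟨h1, h2⟩
      exact ⟨by omega, by omega⟩
    · rintro ⟨h1, h2⟩
      have := k.isLt; have := l.isLt
      exact ⟨by omega, by omega⟩
  rw [Fintype.card_congr e1, Fintype.card_prod]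
  have hc : ∀ a : Fin n, Fintype.card {k : Fin n // k ≠ a} = n - 1 := by
    intro a
    have := Fintype.card_subtype_compl (fun k : Fin n => k = a)
    simpa using this
  rw [hc, hc]

include hn in
lemma finrank_Bn12 : finrank ℂ (Bn12 n) = (n-1) * (n-1) - 1 := by
  classical
  set W := Submodule.span ℂ (Sset n) with hW
  have hB : Bn12 n = Submodule.map W.subtype (Submodule.comap W.subtype (sln n)) := by
    rw [Submodule.map_comap_subtype]; rfl
  set f0 : W →ₗ[ℂ] ℂ := (Matrix.traceLinearMap (Fin n) ℂ ℂ).comp W.subtype with hf0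
  have hker : Submodule.comap W.subtype (sln n) = LinearMap.ker f0 := by
    rw [hf0, LinearMap.ker_comp]; rfl
  have hE1 : (Matrix.single (⟨1, by omega⟩ : Fin n) (⟨1, by omega⟩ : Fin n) (1:ℂ)) ∈ W :=
    Submodule.subset_span ⟨⟨1, by omega⟩, ⟨1, by omega⟩, by simp; omega, by simp, rfl⟩
  have hsurj : LinearMap.range f0 = ⊤ := by
    rw [LinearMap.range_eq_top]
    intro c
    refine ⟨c • ⟨_, hE1⟩, ?_⟩
    rw [LinearMap.map_smul]
    have : f0 ⟨_, hE1⟩ = 1 := by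
      simp [hf0, Matrix.trace_single_eq_same]
    rw [this, smul_eq_mul, mul_one]
  have hrn := LinearMap.finrank_range_add_finrank_ker f0
  rw [hsurj, finrank_top, finrank_self] at hrn
  have hWr : finrank ℂ W = (n-1) * (n-1) := finrank_spanS n hn
  rw [hB, hker, Submodule.finrank_map_subtype_eq]
  omega

end main

theorem stmt_7 (n : ℕ) (hn : 3 ≤ n)
    (U : Submodule ℂ (Matrix (Fin n) (Fin n) ℂ))
    (hUdef : U = Submodule.span ℂ
        {Matrix.single (⟨0, by omega⟩ : Fin n) (⟨0, by omega⟩ : Fin n) (1 : ℂ) -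
          Matrix.single (⟨n - 1, by omega⟩ : Fin n) (⟨n - 1, by omega⟩ : Fin n) 1} ⊔
      Bn12 n) :
    Module.finrank ℂ U = (n - 1) ^ 2 ∧
    ∀ g : Matrix.SpecialLinearGroup (Fin n) ℂ,
      U ⊔ Submodule.map (slConj g) U ≠ sln n := by
  classical
  set i0 : Fin n := ⟨0, by omega⟩ with hi0
  set iN : Fin n := ⟨n - 1, by omega⟩ with hiN
  have hi0N : i0 ≠ iN := by simp [hi0, hiN, Fin.ext_iff]; omega
  set D : Matrix (Fin n) (Fin n) ℂ :=
    Matrix.single i0 i0 (1:ℂ) - Matrix.single iN iN 1 with hD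
  have hU : U = Submodule.span ℂ {D} ⊔ Bn12 n := hUdef
  -- evaluation at (iN, iN) kills the span of Sset
  have hWev : ∀ m ∈ Submodule.span ℂ (Sset n), m iN iN = 0 := by
    intro m hm
    induction hm using Submodule.span_induction with
    | mem x hx =>
      obtain ⟨k, l, hk, hl, rfl⟩ := hx
      refine Matrix.single_apply_of_ne _ _ _ _ _ ?_
      rintro ⟨rfl, -⟩
      have : n - 1 + 1 ≤ n - 1 := by simpa [hiN] using hk
      omega
    | zero => simp
    | add x y _ _ hx hy => simp [Matrix.add_apply, hx, hy]
    | smul c x _ hx => simp [Matrix.smul_apply, hx]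
  constructor
  · -- dimension computation
    have hD0 : D ≠ 0 := by
      intro h
      have := congrFun (congrFun h i0) i0
      simp [hD, Matrix.single_apply_same,
        Matrix.single_apply_of_ne _ _ _ _ _ (show ¬(iN = i0 ∧ iN = i0) by tauto)] at this
    have hdisj : Submodule.span ℂ {D} ⊓ Bn12 n = ⊥ := by
      rw [eq_bot_iff]
      rintro x hx
      rw [Submodule.mem_inf] at hx
      obtain ⟨hx1, hx2⟩ := hx
      obtain ⟨c, rfl⟩ := Submodule.mem_span_singleton.1 hx1
      have hm : (c • D) iN iN = 0 := hWev _ hx2.1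
      have hDN : D iN iN = -1 := by
        simp [hD, Matrix.single_apply_same,
          Matrix.single_apply_of_ne _ _ _ _ _ (show ¬(i0 = iN ∧ i0 = iN) by tauto)]
      rw [Matrix.smul_apply, hDN, smul_eq_mul] at hm
      have : c = 0 := by simpa using hm
      simp [this]
    have hsum := Submodule.finrank_sup_add_finrank_inf_eq (Submodule.span ℂ {D}) (Bn12 n)
    rw [hdisj, finrank_bot, finrank_span_singleton hD0, finrank_Bn12 n hn] at hsum
    have hge : 1 ≤ (n-1) * (n-1) := by
      have : 1 ≤ n - 1 := by omega
      exact Nat.one_le_iff_ne_zero.2 (by positivity)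
    have hpow : (n-1)^2 = (n-1) * (n-1) := pow_two (n-1)
    rw [hU, hpow]
    omega
  · -- non-spanning
    intro g hEq
    set G : Matrix (Fin n) (Fin n) ℂ := (g : Matrix (Fin n) (Fin n) ℂ) with hG
    set G' : Matrix (Fin n) (Fin n) ℂ :=
      ((g⁻¹ : Matrix.SpecialLinearGroup (Fin n) ℂ) : Matrix (Fin n) (Fin n) ℂ) with hG'
    have hG'G : G' * G = 1 := by
      rw [hG', hG, ← Matrix.SpecialLinearGroup.coe_mul, inv_mul_cancel,
        Matrix.SpecialLinearGroup.coe_one]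
    have hGG' : G * G' = 1 := by
      rw [hG', hG, ← Matrix.SpecialLinearGroup.coe_mul, mul_inv_cancel,
        Matrix.SpecialLinearGroup.coe_one]
    set E : Matrix (Fin n) (Fin n) ℂ := Matrix.single i0 iN 1 with hE
    -- main vanishing lemma
    have main : ∀ α β : ℂ, α * G iN i0 = β * G' iN i0 →
        ∀ z : Matrix (Fin n) (Fin n) ℂ, Matrix.trace z = 0 →
        Matrix.trace (z * (α • (G * E) + β • (E * G'))) = 0 := by
      intro α β hC z hz
      set y : Matrix (Fin n) (Fin n) ℂ := α • (G * E) + β • (E * G') with hy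
      set φ : Matrix (Fin n) (Fin n) ℂ →ₗ[ℂ] ℂ :=
        (Matrix.traceLinearMap (Fin n) ℂ ℂ).comp (LinearMap.mulRight ℂ y) with hφ
      have hφ_apply : ∀ x, φ x = Matrix.trace (x * y) := fun x => rfl
      -- y vanishes at positions (l, k) with k ≠ iN, l ≠ i0
      have hyval : ∀ l k : Fin n, k ≠ iN → l ≠ i0 → y l k = 0 := by
        intro l k hk hl
        simp [hy, hE, Matrix.add_apply, Matrix.smul_apply,
          Matrix.mul_single_apply_of_ne _ _ _ _ _ hk,
          Matrix.single_mul_apply_of_ne _ _ _ _ _ hl]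
      have hφD : φ D = 0 := by
        rw [hφ_apply, hD, Matrix.sub_mul, Matrix.trace_sub, trace_std_mul, trace_std_mul]
        have h1 : y i0 i0 = β * G' iN i0 := by
          simp [hy, hE, Matrix.add_apply, Matrix.smul_apply,
            Matrix.mul_single_apply_of_ne _ _ _ _ _ hi0N,
            Matrix.single_mul_apply_same]
        have h2 : y iN iN = α * G iN i0 := by
          simp [hy, hE, Matrix.add_apply, Matrix.smul_apply,
            Matrix.single_mul_apply_of_ne _ _ _ _ _ (Ne.symm hi0N),
            Matrix.mul_single_apply_same]
        rw [h1, h2, hC, sub_self]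
      have hSker : Submodule.span ℂ (Sset n) ≤ LinearMap.ker φ := by
        rw [Submodule.span_le]
        rintro m ⟨k, l, hk, hl, rfl⟩
        rw [SetLike.mem_coe, LinearMap.mem_ker, hφ_apply, trace_std_mul]
        exact hyval l k (by simp [hiN, Fin.ext_iff]; omega) (by simp [hi0, Fin.ext_iff]; omega)
      have hUker : U ≤ LinearMap.ker φ := by
        rw [hU]
        refine sup_le ?_ (le_trans inf_le_left hSker)
        rw [Submodule.span_le]
        intro m hm
        simp only [Set.mem_singleton_iff] at hm
        subst hm
        exact hφD
      -- now the conjugated part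
      set ψ : Matrix (Fin n) (Fin n) ℂ →ₗ[ℂ] ℂ := φ.comp (slConj g) with hψ
      have hψ_apply : ∀ x, ψ x = Matrix.trace (x * (α • (E * G) + β • (G' * E))) := by
        intro x
        have hkey : G' * y * G = α • (E * G) + β • (G' * E) := by
          simp only [hy, Matrix.mul_add, Matrix.add_mul, Matrix.mul_smul, Matrix.smul_mul,
            ← mul_assoc]
          rw [hG'G, one_mul, mul_assoc (G' * E), hG'G, mul_one]
        have h1 : ψ x = Matrix.trace ((G * x * G') * y) := rfl
        calc ψ x = Matrix.trace ((G * x) * (G' * y)) := by rw [h1, mul_assoc (G * x) G' y]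
          _ = Matrix.trace ((G' * y) * (G * x)) := Matrix.trace_mul_comm _ _
          _ = Matrix.trace (((G' * y) * G) * x) := by rw [mul_assoc (G' * y) G x]
          _ = Matrix.trace (x * ((G' * y) * G)) := Matrix.trace_mul_comm _ _
          _ = Matrix.trace (x * (α • (E * G) + β • (G' * E))) := by rw [hkey]
      set y' : Matrix (Fin n) (Fin n) ℂ := α • (E * G) + β • (G' * E) with hy'
      have hy'val : ∀ l k : Fin n, k ≠ iN → l ≠ i0 → y' l k = 0 := by
        intro l k hk hl
        simp [hy', hE, Matrix.add_apply, Matrix.smul_apply,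
          Matrix.single_mul_apply_of_ne _ _ _ _ _ hl,
          Matrix.mul_single_apply_of_ne _ _ _ _ _ hk]
      have hψD : ψ D = 0 := by
        rw [hψ_apply D, hD, Matrix.sub_mul, Matrix.trace_sub, trace_std_mul, trace_std_mul]
        have h1 : y' i0 i0 = α * G iN i0 := by
          simp [hy', hE, Matrix.add_apply, Matrix.smul_apply,
            Matrix.single_mul_apply_same,
            Matrix.mul_single_apply_of_ne _ _ _ _ _ hi0N]
        have h2 : y' iN iN = β * G' iN i0 := by
          simp [hy', hE, Matrix.add_apply, Matrix.smul_apply,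
            Matrix.single_mul_apply_of_ne _ _ _ _ _ (Ne.symm hi0N),
            Matrix.mul_single_apply_same]
        rw [h1, h2, hC, sub_self]
      have hUψ : U ≤ LinearMap.ker ψ := by
        rw [hU]
        refine sup_le ?_ ?_
        · rw [Submodule.span_le]
          intro m hm
          simp only [Set.mem_singleton_iff] at hm
          subst hm
          exact hψD
        · refine le_trans inf_le_left ?_
          rw [Submodule.span_le]
          rintro m ⟨k, l, hk, hl, rfl⟩
          rw [SetLike.mem_coe, LinearMap.mem_ker, hψ_apply, trace_std_mul]
          exact hy'val l k (by simp [hiN, Fin.ext_iff]; omega) (by simp [hi0, Fin.ext_iff]; omega)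
      have hmapker : Submodule.map (slConj g) U ≤ LinearMap.ker φ := by
        rw [Submodule.map_le_iff_le_comap, ← LinearMap.ker_comp]
        exact hUψ
      have hzU : z ∈ U ⊔ Submodule.map (slConj g) U := by
        rw [hEq]
        exact hz
      have : z ∈ LinearMap.ker φ := (sup_le hUker hmapker) hzU
      rw [LinearMap.mem_ker, hφ_apply] at this
      exact this
    -- find a contradiction by cases
    have hdetG : G.det = 1 := g.prop
    have hdetG' : G'.det ≠ 0 := by
      have : G'.det * G.det = 1 := by rw [← Matrix.det_mul, hG'G, Matrix.det_one]
      intro h; rw [h, zero_mul] at this; exact zero_ne_one this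
    by_cases hGN : G iN i0 = 0
    · -- case A
      have hcol : ∃ i, G i i0 ≠ 0 := by
        by_contra h
        push_neg at h
        have : G.det = 0 := Matrix.det_eq_zero_of_column_eq_zero i0 h
        rw [hdetG] at this; exact one_ne_zero this
      obtain ⟨i, hi⟩ := hcol
      have hiN' : i ≠ iN := fun h => hi (h ▸ hGN)
      have := main 1 0 (by rw [hGN, one_mul, zero_mul]) (Matrix.single iN i 1)
        (Matrix.trace_single_eq_of_ne _ _ _ (Ne.symm hiN'))
      rw [trace_std_mul] at this
      have hval : (((1:ℂ) • (G * E) + (0:ℂ) • (E * G')) : Matrix (Fin n) (Fin n) ℂ) i iN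
          = G i i0 := by
        simp [hE, Matrix.add_apply, Matrix.smul_apply,
          Matrix.mul_single_apply_same]
      rw [hval] at this
      exact hi this
    · -- case B
      by_cases hG'N : G' iN i0 = 0
      · -- B2 : α = 0, β = 1
        have hrow : ∃ j, G' iN j ≠ 0 := by
          by_contra h
          push_neg at h
          exact hdetG' (Matrix.det_eq_zero_of_row_eq_zero iN h)
        obtain ⟨j, hj⟩ := hrow
        have hj0 : j ≠ i0 := fun h => hj (h ▸ hG'N)
        have := main 0 1 (by rw [hG'N, zero_mul, mul_zero]) (Matrix.single j i0 1)
          (Matrix.trace_single_eq_of_ne _ _ _ hj0)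
        rw [trace_std_mul] at this
        have hval : (((0:ℂ) • (G * E) + (1:ℂ) • (E * G')) : Matrix (Fin n) (Fin n) ℂ) i0 j
            = G' iN j := by
          simp [hE, Matrix.add_apply, Matrix.smul_apply,
            Matrix.single_mul_apply_same]
        rw [hval] at this
        exact hj this
      · -- B1 : α = G' iN i0 ≠ 0, β = G iN i0
        set i1 : Fin n := ⟨1, by omega⟩ with hi1
        have hi1N : i1 ≠ iN := by simp [hi1, hiN, Fin.ext_iff]; omega
        have hi10 : i1 ≠ i0 := by simp [hi1, hi0, Fin.ext_iff]
        have htr : Matrix.trace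
            ((Matrix.single iN iN (1:ℂ) - Matrix.single i1 i1 1) :
              Matrix (Fin n) (Fin n) ℂ) = 0 := by
          rw [Matrix.trace_sub, Matrix.trace_single_eq_same, Matrix.trace_single_eq_same,
            sub_self]
        have := main (G' iN i0) (G iN i0) (mul_comm _ _)
          (Matrix.single iN iN 1 - Matrix.single i1 i1 1) htr
        rw [Matrix.sub_mul, Matrix.trace_sub, trace_std_mul, trace_std_mul] at this
        set y : Matrix (Fin n) (Fin n) ℂ := (G' iN i0) • (G * E) + (G iN i0) • (E * G') with hy
        have h1 : y iN iN = G' iN i0 * G iN i0 := by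
          simp [hy, hE, Matrix.add_apply, Matrix.smul_apply,
            Matrix.mul_single_apply_same,
            Matrix.single_mul_apply_of_ne _ _ _ _ _ (Ne.symm hi0N)]
        have h2 : y i1 i1 = 0 := by
          simp [hy, hE, Matrix.add_apply, Matrix.smul_apply,
            Matrix.mul_single_apply_of_ne _ _ _ _ _ hi1N,
            Matrix.single_mul_apply_of_ne _ _ _ _ _ hi10]
        rw [h1, h2, sub_zero] at this
        exact hG'N (by
          rcases mul_eq_zero.1 this with h | h
          · exact h
          · exact absurd h hGN)
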